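/- arXiv:1907.01701 — 7 statements merged into one kernel-verified Lean document; each statement's English description precedes it below -/
import Mathlib

section
/- The function u(x,y,z) = x^2 y^2 + 2z^2 satisfies (∇_H^2 u)^⋆(p) ≥ 0 (positive semidefinite) at every point p ∈ R^3, where (∇_H^2 u)^⋆ is the symmetrized horizontal Hessian built from X = ∂_x - (y/2)∂_z and Y = ∂_y + (x/2)∂_z, but u is not convex in the Euclidean sense on R^3. -/
noncomputable section

abbrev H3 : Type := ℝ × ℝ × ℝ

def hmul (p q : H3) : H3 :=
  (p.1 + q.1, p.2.1 + q.2.1, p.2.2 + q.2.2 + (p.1 * q.2.1 - q.1 * p.2.1) / 2)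

def pd1 (u : H3 → ℝ) (p : H3) : ℝ := fderiv ℝ u p (1, 0, 0)
def pd2 (u : H3 → ℝ) (p : H3) : ℝ := fderiv ℝ u p (0, 1, 0)
def pd3 (u : H3 → ℝ) (p : H3) : ℝ := fderiv ℝ u p (0, 0, 1)

/-- Left-invariant horizontal vector field X = ∂ₓ − (y/2)∂_z. -/
def Xop (u : H3 → ℝ) (p : H3) : ℝ := pd1 u p - p.2.1 / 2 * pd3 u p

/-- Left-invariant horizontal vector field Y = ∂_y + (x/2)∂_z. -/
def Yop (u : H3 → ℝ) (p : H3) : ℝ := pd2 u p + p.1 / 2 * pd3 u p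

/-- Symmetrized horizontal Hessian. -/
def hHess (u : H3 → ℝ) (p : H3) : Matrix (Fin 2) (Fin 2) ℝ :=
  !![Xop (Xop u) p, (Xop (Yop u) p + Yop (Xop u) p) / 2;
     (Xop (Yop u) p + Yop (Xop u) p) / 2, Yop (Yop u) p]

section aux

private lemma hfd1 (p : H3) :
    HasFDerivAt (fun q : H3 => q.1) (ContinuousLinearMap.fst ℝ ℝ (ℝ × ℝ)) p := hasFDerivAt_fst
private lemma hfd2 (p : H3) : HasFDerivAt (fun q : H3 => q.2.1)
    ((ContinuousLinearMap.fst ℝ ℝ ℝ).comp (ContinuousLinearMap.snd ℝ ℝ (ℝ × ℝ))) p :=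
  hasFDerivAt_fst.comp p hasFDerivAt_snd
private lemma hfd3 (p : H3) : HasFDerivAt (fun q : H3 => q.2.2)
    ((ContinuousLinearMap.snd ℝ ℝ ℝ).comp (ContinuousLinearMap.snd ℝ ℝ (ℝ × ℝ))) p :=
  hasFDerivAt_snd.comp p hasFDerivAt_snd

private lemma fderiv_u (p v : H3) :
    fderiv ℝ (fun q : H3 => q.1 ^ 2 * q.2.1 ^ 2 + 2 * q.2.2 ^ 2) p v =
      2 * p.1 * p.2.1 ^ 2 * v.1 + 2 * p.1 ^ 2 * p.2.1 * v.2.1 + 4 * p.2.2 * v.2.2 := by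
  have h := (((hfd1 p).mul (hfd1 p)).mul ((hfd2 p).mul (hfd2 p))).add
    (((hfd3 p).mul (hfd3 p)).const_mul 2)
  simp only [pow_two]
  erw [h.fderiv]
  simp [ContinuousLinearMap.add_apply, ContinuousLinearMap.smul_apply]
  ring

private lemma fderiv_Xu (p v : H3) :
    fderiv ℝ (fun q : H3 => 2 * (q.1 * (q.2.1 * q.2.1)) - 2 * (q.2.1 * q.2.2)) p v =
      2 * p.2.1 ^ 2 * v.1 + (4 * p.1 * p.2.1 - 2 * p.2.2) * v.2.1 - 2 * p.2.1 * v.2.2 := by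
  have h := (((hfd1 p).mul ((hfd2 p).mul (hfd2 p))).const_mul 2).sub
    (((hfd2 p).mul (hfd3 p)).const_mul 2)
  erw [h.fderiv]
  simp [ContinuousLinearMap.add_apply, ContinuousLinearMap.smul_apply]
  ring

private lemma fderiv_Yu (p v : H3) :
    fderiv ℝ (fun q : H3 => 2 * (q.1 * (q.1 * q.2.1)) + 2 * (q.1 * q.2.2)) p v =
      (4 * p.1 * p.2.1 + 2 * p.2.2) * v.1 + 2 * p.1 ^ 2 * v.2.1 + 2 * p.1 * v.2.2 := by
  have h := (((hfd1 p).mul ((hfd1 p).mul (hfd2 p))).const_mul 2).add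
    (((hfd1 p).mul (hfd3 p)).const_mul 2)
  erw [h.fderiv]
  simp [ContinuousLinearMap.add_apply, ContinuousLinearMap.smul_apply]
  ring

private lemma Xop_u :
    Xop (fun q : H3 => q.1 ^ 2 * q.2.1 ^ 2 + 2 * q.2.2 ^ 2) =
      fun q : H3 => 2 * (q.1 * (q.2.1 * q.2.1)) - 2 * (q.2.1 * q.2.2) := by
  funext p
  simp only [Xop, pd1, pd3, fderiv_u]
  ring

private lemma Yop_u :
    Yop (fun q : H3 => q.1 ^ 2 * q.2.1 ^ 2 + 2 * q.2.2 ^ 2) =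
      fun q : H3 => 2 * (q.1 * (q.1 * q.2.1)) + 2 * (q.1 * q.2.2) := by
  funext p
  simp only [Yop, pd2, pd3, fderiv_u]
  ring

end aux

theorem hconvex_not_euclidean_convex :
    (∀ p : H3, (hHess (fun q : H3 => q.1 ^ 2 * q.2.1 ^ 2 + 2 * q.2.2 ^ 2) p).PosSemidef) ∧
    ¬ ConvexOn ℝ Set.univ (fun q : H3 => q.1 ^ 2 * q.2.1 ^ 2 + 2 * q.2.2 ^ 2) := by
  constructor
  · intro p
    have hXX : Xop (Xop (fun q : H3 => q.1 ^ 2 * q.2.1 ^ 2 + 2 * q.2.2 ^ 2)) p =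
        3 * p.2.1 ^ 2 := by
      rw [Xop_u]; simp only [Xop, pd1, pd3, fderiv_Xu]; ring
    have hYX : Yop (Xop (fun q : H3 => q.1 ^ 2 * q.2.1 ^ 2 + 2 * q.2.2 ^ 2)) p =
        3 * p.1 * p.2.1 - 2 * p.2.2 := by
      rw [Xop_u]; simp only [Yop, pd2, pd3, fderiv_Xu]; ring
    have hXY : Xop (Yop (fun q : H3 => q.1 ^ 2 * q.2.1 ^ 2 + 2 * q.2.2 ^ 2)) p =
        3 * p.1 * p.2.1 + 2 * p.2.2 := by
      rw [Yop_u]; simp only [Xop, pd1, pd3, fderiv_Yu]; ring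
    have hYY : Yop (Yop (fun q : H3 => q.1 ^ 2 * q.2.1 ^ 2 + 2 * q.2.2 ^ 2)) p =
        3 * p.1 ^ 2 := by
      rw [Yop_u]; simp only [Yop, pd2, pd3, fderiv_Yu]; ring
    set A : Matrix (Fin 3) (Fin 2) ℝ :=
      Matrix.of (fun _ j => ![p.2.1, p.1] j) with hA
    have hM : hHess (fun q : H3 => q.1 ^ 2 * q.2.1 ^ 2 + 2 * q.2.2 ^ 2) p =
        A.conjTranspose * A := by
      rw [hHess, hXX, hYX, hXY, hYY]
      ext i j
      fin_cases i <;> fin_cases j <;>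
        simp [hA, Matrix.mul_apply, Fin.sum_univ_three, Matrix.conjTranspose_apply] <;> ring
    rw [hM]
    exact Matrix.posSemidef_conjTranspose_mul_self A
  · intro hc
    have h := hc.2 (Set.mem_univ ((2 : ℝ), (0 : ℝ), (0 : ℝ)))
      (Set.mem_univ ((0 : ℝ), (2 : ℝ), (0 : ℝ)))
      (by norm_num : (0:ℝ) ≤ (1/2:ℝ)) (by norm_num : (0:ℝ) ≤ (1/2:ℝ)) (by norm_num)
    simp only [Prod.smul_def, smul_eq_mul, Prod.fst_add, Prod.snd_add, Prod.smul_fst,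
      Prod.smul_snd] at h
    norm_num at h
end
end

section
/- For u(x,y,z) = 2xz + x²y + (1/4)x⁴ - x² + (3/2)y², the symmetrized horizontal Hessian equals (∇_H^2 u)^⋆(x,y,z) = [[3x²-2, 3x],[3x, 3]], and this matrix is not positive semidefinite at the origin (so u is not h-convex), while for f(x,y,z) = 2xz + x²y + (1/4)x⁴ + (3/2)y² + 6y - 1 the symmetrized horizontal Hessian equals [[3x², 3x],[3x, 3]], which is positive semidefinite at every point. -/
noncomputable section

/-! ### Auxiliary machinery -/

lemma fderiv_apply_eq (u : H3 → ℝ) {p : H3} (v : H3) (h : DifferentiableAt ℝ u p) :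
    fderiv ℝ u p v = deriv (fun t : ℝ => u (p + t • v)) 0 := by
  have hg : HasDerivAt (fun t : ℝ => p + t • v) v 0 := by
    simpa using ((hasDerivAt_id (0:ℝ)).smul_const v).const_add p
  have h' : HasFDerivAt u (fderiv ℝ u p) (p + (0:ℝ) • v) := by
    simpa using h.hasFDerivAt
  exact ((h'.comp_hasDerivAt 0 hg).deriv).symm

lemma hshift (x : ℝ) : HasDerivAt (fun t : ℝ => x + t) 1 0 := by
  simpa using (hasDerivAt_id (0:ℝ)).const_add x

/-- u(x,y,z) = 2xz + x²y + x⁴/4 − x² + (3/2)y². -/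
def u0 : H3 → ℝ := fun q => 2 * q.1 * q.2.2 + q.1 ^ 2 * q.2.1 + (1 / 4) * q.1 ^ 4
          - q.1 ^ 2 + (3 / 2) * q.2.1 ^ 2

/-- f(x,y,z) = 2xz + x²y + x⁴/4 + (3/2)y² + 6y − 1. -/
def f0 : H3 → ℝ := fun q => 2 * q.1 * q.2.2 + q.1 ^ 2 * q.2.1 + (1 / 4) * q.1 ^ 4
          + (3 / 2) * q.2.1 ^ 2 + 6 * q.2.1 - 1

def Xu0 : H3 → ℝ := fun q => 2 * q.2.2 + q.1 * q.2.1 + q.1 ^ 3 - 2 * q.1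
def Yu0 : H3 → ℝ := fun q => 2 * q.1 ^ 2 + 3 * q.2.1
def Xf0 : H3 → ℝ := fun q => 2 * q.2.2 + q.1 * q.2.1 + q.1 ^ 3
def Yf0 : H3 → ℝ := fun q => 2 * q.1 ^ 2 + 3 * q.2.1 + 6

/-! ### First-order derivatives of u0 -/

lemma pd1_u0 (x y z : ℝ) : pd1 u0 (x,y,z) = 2*z + 2*x*y + x^3 - 2*x := by
  rw [pd1, fderiv_apply_eq _ _ (by unfold u0; fun_prop)]
  have heq : (fun t : ℝ => u0 (((x,y,z) : H3) + t • ((1:ℝ),(0:ℝ),(0:ℝ))))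
      = fun t : ℝ => 2 * (x+t) * z + (x+t)^2*y + (1/4)*(x+t)^4 - (x+t)^2 + (3/2)*y^2 := by
    funext t; simp [u0, Prod.smul_mk, Prod.mk_add_mk]
  rw [heq]
  have hx := hshift x
  have H := (((((hx.const_mul (2:ℝ)).mul_const z).add ((hx.pow 2).mul_const y)).add
      ((hx.pow 4).const_mul ((1:ℝ)/4))).sub (hx.pow 2)).add_const ((3/2)*y^2)
  refine H.deriv.trans ?_; norm_num; ring

lemma pd2_u0 (x y z : ℝ) : pd2 u0 (x,y,z) = x^2 + 3*y := by
  rw [pd2, fderiv_apply_eq _ _ (by unfold u0; fun_prop)]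
  have heq : (fun t : ℝ => u0 (((x,y,z) : H3) + t • ((0:ℝ),(1:ℝ),(0:ℝ))))
      = fun t : ℝ => 2 * x * z + x^2*(y+t) + (1/4)*x^4 - x^2 + (3/2)*(y+t)^2 := by
    funext t; simp [u0, Prod.smul_mk, Prod.mk_add_mk]
  rw [heq]
  have hy := hshift y
  have H := ((((hasDerivAt_const (0:ℝ) (2*x*z)).add (hy.const_mul (x^2))).add_const
      ((1/4)*x^4)).sub_const (x^2)).add ((hy.pow 2).const_mul ((3:ℝ)/2))
  refine H.deriv.trans ?_; norm_num; ring

lemma pd3_u0 (x y z : ℝ) : pd3 u0 (x,y,z) = 2*x := by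
  rw [pd3, fderiv_apply_eq _ _ (by unfold u0; fun_prop)]
  have heq : (fun t : ℝ => u0 (((x,y,z) : H3) + t • ((0:ℝ),(0:ℝ),(1:ℝ))))
      = fun t : ℝ => 2 * x * (z+t) + (x^2*y + (1/4)*x^4 - x^2 + (3/2)*y^2) := by
    funext t; simp [u0, Prod.smul_mk, Prod.mk_add_mk]; ring
  rw [heq]
  have H := (((hshift z).const_mul (2*x)).add_const (x^2*y + (1/4)*x^4 - x^2 + (3/2)*y^2))
  rw [H.deriv]; ring

/-! ### First-order derivatives of f0 -/

lemma pd1_f0 (x y z : ℝ) : pd1 f0 (x,y,z) = 2*z + 2*x*y + x^3 := by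
  rw [pd1, fderiv_apply_eq _ _ (by unfold f0; fun_prop)]
  have heq : (fun t : ℝ => f0 (((x,y,z) : H3) + t • ((1:ℝ),(0:ℝ),(0:ℝ))))
      = fun t : ℝ => 2 * (x+t) * z + (x+t)^2*y + (1/4)*(x+t)^4 + ((3/2)*y^2 + 6*y - 1) := by
    funext t; simp [f0, Prod.smul_mk, Prod.mk_add_mk]; ring
  rw [heq]
  have hx := hshift x
  have H := ((((hx.const_mul (2:ℝ)).mul_const z).add ((hx.pow 2).mul_const y)).add
      ((hx.pow 4).const_mul ((1:ℝ)/4))).add_const ((3/2)*y^2 + 6*y - 1)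
  refine H.deriv.trans ?_; norm_num; ring

lemma pd2_f0 (x y z : ℝ) : pd2 f0 (x,y,z) = x^2 + 3*y + 6 := by
  rw [pd2, fderiv_apply_eq _ _ (by unfold f0; fun_prop)]
  have heq : (fun t : ℝ => f0 (((x,y,z) : H3) + t • ((0:ℝ),(1:ℝ),(0:ℝ))))
      = fun t : ℝ => x^2*(y+t) + (3/2)*(y+t)^2 + 6*(y+t) + (2*x*z + (1/4)*x^4 - 1) := by
    funext t; simp [f0, Prod.smul_mk, Prod.mk_add_mk]; ring
  rw [heq]
  have hy := hshift y
  have H := (((hy.const_mul (x^2)).add ((hy.pow 2).const_mul ((3:ℝ)/2))).add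
      (hy.const_mul (6:ℝ))).add_const (2*x*z + (1/4)*x^4 - 1)
  refine H.deriv.trans ?_; norm_num; ring

lemma pd3_f0 (x y z : ℝ) : pd3 f0 (x,y,z) = 2*x := by
  rw [pd3, fderiv_apply_eq _ _ (by unfold f0; fun_prop)]
  have heq : (fun t : ℝ => f0 (((x,y,z) : H3) + t • ((0:ℝ),(0:ℝ),(1:ℝ))))
      = fun t : ℝ => 2 * x * (z+t) + (x^2*y + (1/4)*x^4 + (3/2)*y^2 + 6*y - 1) := by
    funext t; simp [f0, Prod.smul_mk, Prod.mk_add_mk]; ring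
  rw [heq]
  have H := (((hshift z).const_mul (2*x)).add_const (x^2*y + (1/4)*x^4 + (3/2)*y^2 + 6*y - 1))
  rw [H.deriv]; ring

/-! ### Derivatives of the first-order horizontal derivatives -/

lemma pd1_Xu0 (x y z : ℝ) : pd1 Xu0 (x,y,z) = y + 3*x^2 - 2 := by
  rw [pd1, fderiv_apply_eq _ _ (by unfold Xu0; fun_prop)]
  have heq : (fun t : ℝ => Xu0 (((x,y,z) : H3) + t • ((1:ℝ),(0:ℝ),(0:ℝ))))
      = fun t : ℝ => (x+t)*y + (x+t)^3 - 2*(x+t) + 2*z := by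
    funext t; simp [Xu0, Prod.smul_mk, Prod.mk_add_mk]; ring
  rw [heq]
  have hx := hshift x
  have H := (((hx.mul_const y).add (hx.pow 3)).sub (hx.const_mul (2:ℝ))).add_const (2*z)
  refine H.deriv.trans ?_; norm_num

lemma pd2_Xu0 (x y z : ℝ) : pd2 Xu0 (x,y,z) = x := by
  rw [pd2, fderiv_apply_eq _ _ (by unfold Xu0; fun_prop)]
  have heq : (fun t : ℝ => Xu0 (((x,y,z) : H3) + t • ((0:ℝ),(1:ℝ),(0:ℝ))))
      = fun t : ℝ => x*(y+t) + (2*z + x^3 - 2*x) := by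
    funext t; simp [Xu0, Prod.smul_mk, Prod.mk_add_mk]; ring
  rw [heq]
  have H := ((hshift y).const_mul x).add_const (2*z + x^3 - 2*x)
  rw [H.deriv]; ring

lemma pd3_Xu0 (x y z : ℝ) : pd3 Xu0 (x,y,z) = 2 := by
  rw [pd3, fderiv_apply_eq _ _ (by unfold Xu0; fun_prop)]
  have heq : (fun t : ℝ => Xu0 (((x,y,z) : H3) + t • ((0:ℝ),(0:ℝ),(1:ℝ))))
      = fun t : ℝ => 2*(z+t) + (x*y + x^3 - 2*x) := by
    funext t; simp [Xu0, Prod.smul_mk, Prod.mk_add_mk]; ring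
  rw [heq]
  have H := ((hshift z).const_mul (2:ℝ)).add_const (x*y + x^3 - 2*x)
  rw [H.deriv]; ring

lemma pd1_Yu0 (x y z : ℝ) : pd1 Yu0 (x,y,z) = 4*x := by
  rw [pd1, fderiv_apply_eq _ _ (by unfold Yu0; fun_prop)]
  have heq : (fun t : ℝ => Yu0 (((x,y,z) : H3) + t • ((1:ℝ),(0:ℝ),(0:ℝ))))
      = fun t : ℝ => 2*(x+t)^2 + 3*y := by
    funext t; simp [Yu0, Prod.smul_mk, Prod.mk_add_mk]
  rw [heq]
  have H := (((hshift x).pow 2).const_mul (2:ℝ)).add_const (3*y)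
  refine H.deriv.trans ?_; norm_num; ring

lemma pd2_Yu0 (x y z : ℝ) : pd2 Yu0 (x,y,z) = 3 := by
  rw [pd2, fderiv_apply_eq _ _ (by unfold Yu0; fun_prop)]
  have heq : (fun t : ℝ => Yu0 (((x,y,z) : H3) + t • ((0:ℝ),(1:ℝ),(0:ℝ))))
      = fun t : ℝ => 3*(y+t) + 2*x^2 := by
    funext t; simp [Yu0, Prod.smul_mk, Prod.mk_add_mk]; ring
  rw [heq]
  have H := ((hshift y).const_mul (3:ℝ)).add_const (2*x^2)
  rw [H.deriv]; ring

lemma pd3_Yu0 (x y z : ℝ) : pd3 Yu0 (x,y,z) = 0 := by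
  rw [pd3, fderiv_apply_eq _ _ (by unfold Yu0; fun_prop)]
  have heq : (fun t : ℝ => Yu0 (((x,y,z) : H3) + t • ((0:ℝ),(0:ℝ),(1:ℝ))))
      = fun _ : ℝ => 2*x^2 + 3*y := by
    funext t; simp [Yu0, Prod.smul_mk, Prod.mk_add_mk]
  rw [heq, deriv_const]

lemma pd1_Xf0 (x y z : ℝ) : pd1 Xf0 (x,y,z) = y + 3*x^2 := by
  rw [pd1, fderiv_apply_eq _ _ (by unfold Xf0; fun_prop)]
  have heq : (fun t : ℝ => Xf0 (((x,y,z) : H3) + t • ((1:ℝ),(0:ℝ),(0:ℝ))))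
      = fun t : ℝ => (x+t)*y + (x+t)^3 + 2*z := by
    funext t; simp [Xf0, Prod.smul_mk, Prod.mk_add_mk]; ring
  rw [heq]
  have hx := hshift x
  have H := ((hx.mul_const y).add (hx.pow 3)).add_const (2*z)
  refine H.deriv.trans ?_; norm_num

lemma pd2_Xf0 (x y z : ℝ) : pd2 Xf0 (x,y,z) = x := by
  rw [pd2, fderiv_apply_eq _ _ (by unfold Xf0; fun_prop)]
  have heq : (fun t : ℝ => Xf0 (((x,y,z) : H3) + t • ((0:ℝ),(1:ℝ),(0:ℝ))))
      = fun t : ℝ => x*(y+t) + (2*z + x^3) := by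
    funext t; simp [Xf0, Prod.smul_mk, Prod.mk_add_mk]; ring
  rw [heq]
  have H := ((hshift y).const_mul x).add_const (2*z + x^3)
  rw [H.deriv]; ring

lemma pd3_Xf0 (x y z : ℝ) : pd3 Xf0 (x,y,z) = 2 := by
  rw [pd3, fderiv_apply_eq _ _ (by unfold Xf0; fun_prop)]
  have heq : (fun t : ℝ => Xf0 (((x,y,z) : H3) + t • ((0:ℝ),(0:ℝ),(1:ℝ))))
      = fun t : ℝ => 2*(z+t) + (x*y + x^3) := by
    funext t; simp [Xf0, Prod.smul_mk, Prod.mk_add_mk]; ring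
  rw [heq]
  have H := ((hshift z).const_mul (2:ℝ)).add_const (x*y + x^3)
  rw [H.deriv]; ring

lemma pd1_Yf0 (x y z : ℝ) : pd1 Yf0 (x,y,z) = 4*x := by
  rw [pd1, fderiv_apply_eq _ _ (by unfold Yf0; fun_prop)]
  have heq : (fun t : ℝ => Yf0 (((x,y,z) : H3) + t • ((1:ℝ),(0:ℝ),(0:ℝ))))
      = fun t : ℝ => 2*(x+t)^2 + (3*y + 6) := by
    funext t; simp [Yf0, Prod.smul_mk, Prod.mk_add_mk]; ring
  rw [heq]
  have H := (((hshift x).pow 2).const_mul (2:ℝ)).add_const (3*y + 6)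
  refine H.deriv.trans ?_; norm_num; ring

lemma pd2_Yf0 (x y z : ℝ) : pd2 Yf0 (x,y,z) = 3 := by
  rw [pd2, fderiv_apply_eq _ _ (by unfold Yf0; fun_prop)]
  have heq : (fun t : ℝ => Yf0 (((x,y,z) : H3) + t • ((0:ℝ),(1:ℝ),(0:ℝ))))
      = fun t : ℝ => 3*(y+t) + (2*x^2 + 6) := by
    funext t; simp [Yf0, Prod.smul_mk, Prod.mk_add_mk]; ring
  rw [heq]
  have H := ((hshift y).const_mul (3:ℝ)).add_const (2*x^2 + 6)
  rw [H.deriv]; ring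

lemma pd3_Yf0 (x y z : ℝ) : pd3 Yf0 (x,y,z) = 0 := by
  rw [pd3, fderiv_apply_eq _ _ (by unfold Yf0; fun_prop)]
  have heq : (fun t : ℝ => Yf0 (((x,y,z) : H3) + t • ((0:ℝ),(0:ℝ),(1:ℝ))))
      = fun _ : ℝ => 2*x^2 + 3*y + 6 := by
    funext t; simp [Yf0, Prod.smul_mk, Prod.mk_add_mk]
  rw [heq, deriv_const]

/-! ### Horizontal derivatives as explicit functions -/

lemma Xop_u0 : Xop u0 = Xu0 := by
  funext p; obtain ⟨x, y, z⟩ := p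
  simp only [Xop, pd1_u0, pd3_u0, Xu0]; ring

lemma Yop_u0 : Yop u0 = Yu0 := by
  funext p; obtain ⟨x, y, z⟩ := p
  simp only [Yop, pd2_u0, pd3_u0, Yu0]; ring

lemma Xop_f0 : Xop f0 = Xf0 := by
  funext p; obtain ⟨x, y, z⟩ := p
  simp only [Xop, pd1_f0, pd3_f0, Xf0]; ring

lemma Yop_f0 : Yop f0 = Yf0 := by
  funext p; obtain ⟨x, y, z⟩ := p
  simp only [Yop, pd2_f0, pd3_f0, Yf0]; ring

lemma hHess_u0 (p : H3) : hHess u0 p = !![3 * p.1 ^ 2 - 2, 3 * p.1; 3 * p.1, 3] := by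
  obtain ⟨x, y, z⟩ := p
  rw [hHess, Xop_u0, Yop_u0]
  simp only [Xop, Yop, pd1_Xu0, pd2_Xu0, pd3_Xu0, pd1_Yu0, pd2_Yu0, pd3_Yu0]
  ext i j; fin_cases i <;> fin_cases j <;> simp <;> ring

lemma hHess_f0 (p : H3) : hHess f0 p = !![3 * p.1 ^ 2, 3 * p.1; 3 * p.1, 3] := by
  obtain ⟨x, y, z⟩ := p
  rw [hHess, Xop_f0, Yop_f0]
  simp only [Xop, Yop, pd1_Xf0, pd2_Xf0, pd3_Xf0, pd1_Yf0, pd2_Yf0, pd3_Yf0]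
  ext i j; fin_cases i <;> fin_cases j <;> simp <;> ring

theorem hessians_of_u_and_f :
    (∀ p : H3,
      hHess (fun q : H3 => 2 * q.1 * q.2.2 + q.1 ^ 2 * q.2.1 + (1 / 4) * q.1 ^ 4
          - q.1 ^ 2 + (3 / 2) * q.2.1 ^ 2) p
        = !![3 * p.1 ^ 2 - 2, 3 * p.1; 3 * p.1, 3]) ∧
    ¬ (hHess (fun q : H3 => 2 * q.1 * q.2.2 + q.1 ^ 2 * q.2.1 + (1 / 4) * q.1 ^ 4
          - q.1 ^ 2 + (3 / 2) * q.2.1 ^ 2) ((0 : ℝ), (0 : ℝ), (0 : ℝ))).PosSemidef ∧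
    (∀ p : H3,
      hHess (fun q : H3 => 2 * q.1 * q.2.2 + q.1 ^ 2 * q.2.1 + (1 / 4) * q.1 ^ 4
          + (3 / 2) * q.2.1 ^ 2 + 6 * q.2.1 - 1) p
        = !![3 * p.1 ^ 2, 3 * p.1; 3 * p.1, 3]) ∧
    (∀ p : H3,
      (hHess (fun q : H3 => 2 * q.1 * q.2.2 + q.1 ^ 2 * q.2.1 + (1 / 4) * q.1 ^ 4
          + (3 / 2) * q.2.1 ^ 2 + 6 * q.2.1 - 1) p).PosSemidef) := by
  refine ⟨fun p => hHess_u0 p, ?_, fun p => hHess_f0 p, ?_⟩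
  · intro h
    rw [show (fun q : H3 => 2 * q.1 * q.2.2 + q.1 ^ 2 * q.2.1 + (1 / 4) * q.1 ^ 4
          - q.1 ^ 2 + (3 / 2) * q.2.1 ^ 2) = u0 from rfl, hHess_u0] at h
    have := h.dotProduct_mulVec_nonneg ![1, 0]
    norm_num [Matrix.mulVec, dotProduct, Fin.sum_univ_two] at this
  · intro p
    rw [show (fun q : H3 => 2 * q.1 * q.2.2 + q.1 ^ 2 * q.2.1 + (1 / 4) * q.1 ^ 4
          + (3 / 2) * q.2.1 ^ 2 + 6 * q.2.1 - 1) = f0 from rfl, hHess_f0]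
    refine Matrix.PosSemidef.of_dotProduct_mulVec_nonneg ?_ ?_
    · ext i j; fin_cases i <;> fin_cases j <;> simp [Matrix.conjTranspose_apply]
    · intro v
      have h : dotProduct (star v)
          ((!![3 * p.1 ^ 2, 3 * p.1; 3 * p.1, 3]).mulVec v)
          = 3 * (p.1 * v 0 + v 1)^2 := by
        simp [Matrix.mulVec, dotProduct, Fin.sum_univ_two]; ring
      rw [h]; positivity
end
end

section
/- If u: H → R is upper semicontinuous and bounded below, then S[u] is upper semicontinuous on H, where S[u](p) is the infimum of Σ_{i=1}^3 cᵢ u(pᵢ) over cᵢ ∈ [0,1] with Σcᵢ = 1, pᵢ in the horizontal plane H_p, and Σcᵢ pᵢ = p. -/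
noncomputable section

/-- Membership in the left-invariant horizontal plane through `p`:
`y_p x − x_p y + 2z − 2z_p = 0`. -/
def onPlane (p q : H3) : Prop :=
  p.2.1 * q.1 - p.1 * q.2.1 + 2 * q.2.2 - 2 * p.2.2 = 0

/-- The partial convexification operator `S`. -/
def Sop (u : H3 → ℝ) (p : H3) : ℝ :=
  sInf { s : ℝ | ∃ (c : Fin 3 → ℝ) (q : Fin 3 → H3),
    (∀ i, c i ∈ Set.Icc (0 : ℝ) 1) ∧ (∑ i, c i) = 1 ∧ (∀ i, onPlane p (q i)) ∧
    (∑ i, c i • q i) = p ∧ s = ∑ i, c i * u (q i) }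

/-- Coercivity: `inf_{|p| ≥ R} u(p)/|p| → ∞` as `R → ∞`. -/
def Coercive (u : H3 → ℝ) : Prop :=
  ∀ C : ℝ, ∃ R : ℝ, ∀ p : H3, R ≤ ‖p‖ → C ≤ u p / ‖p‖

/-- Horizontal convexity (midpoint inequality along horizontal directions). -/
def hConvex (u : H3 → ℝ) : Prop :=
  ∀ p h : H3, h.2.2 = 0 → 2 * u p ≤ u (hmul p h) + u (hmul p (-h.1, -h.2.1, -h.2.2))

/-- The translation map sending the plane of `p` to the plane of `r`. -/
def Tmap (p r q : H3) : H3 :=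
  hmul (hmul r (-p.1, -p.2.1, -p.2.2)) q

lemma Tmap_self (p q : H3) : Tmap p p q = q := by
  unfold Tmap hmul
  simp only [Prod.ext_iff]
  refine ⟨by ring, by ring, by ring⟩

lemma Tmap_cont (p q : H3) : Continuous (fun r : H3 => Tmap p r q) := by
  unfold Tmap hmul
  fun_prop

lemma Tmap_plane (p r q : H3) (h : onPlane p q) : onPlane r (Tmap p r q) := by
  unfold onPlane Tmap hmul at *
  dsimp at *
  linear_combination h

theorem S_upperSemicontinuous (u : H3 → ℝ) (husc : UpperSemicontinuous u)
    (hb : BddBelow (Set.range u)) :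
    UpperSemicontinuous (Sop u) := by
  obtain ⟨m, hm⟩ := hb
  have hm' : ∀ x, m ≤ u x := fun x => hm ⟨x, rfl⟩
  have hbdd : ∀ r : H3, m ∈ lowerBounds { s : ℝ | ∃ (c : Fin 3 → ℝ) (q : Fin 3 → H3),
      (∀ i, c i ∈ Set.Icc (0 : ℝ) 1) ∧ (∑ i, c i) = 1 ∧ (∀ i, onPlane r (q i)) ∧
      (∑ i, c i • q i) = r ∧ s = ∑ i, c i * u (q i) } := by
    rintro r s ⟨c, q, hc, hcs, -, -, rfl⟩
    calc m = ∑ i, c i * m := by rw [← Finset.sum_mul, hcs, one_mul]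
    _ ≤ ∑ i, c i * u (q i) :=
      Finset.sum_le_sum fun i _ => mul_le_mul_of_nonneg_left (hm' _) (hc i).1
  have hne : ∀ r : H3, ({ s : ℝ | ∃ (c : Fin 3 → ℝ) (q : Fin 3 → H3),
      (∀ i, c i ∈ Set.Icc (0 : ℝ) 1) ∧ (∑ i, c i) = 1 ∧ (∀ i, onPlane r (q i)) ∧
      (∑ i, c i • q i) = r ∧ s = ∑ i, c i * u (q i) }).Nonempty := by
    intro r
    refine ⟨u r, ![1, 0, 0], fun _ => r, ?_, ?_, ?_, ?_, ?_⟩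
    · intro i; fin_cases i <;> simp
    · simp [Fin.sum_univ_three]
    · intro i; unfold onPlane; ring
    · simp [Fin.sum_univ_three]
    · simp [Fin.sum_univ_three]
  intro p y hy
  obtain ⟨s, ⟨c, q, hc, hcs, hpl, hsum, rfl⟩, hs⟩ :=
    exists_lt_of_csInf_lt (hne p) (show Sop u p < y from hy)
  set δ : ℝ := (y - ∑ i, c i * u (q i)) / 2 with hδ
  have hδpos : 0 < δ := by simp only [hδ]; linarith
  have hev : ∀ᶠ r in nhds p, ∀ i, u (Tmap p r (q i)) < u (q i) + δ := by
    rw [Filter.eventually_all]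
    intro i
    have ht : Filter.Tendsto (fun r : H3 => Tmap p r (q i)) (nhds p) (nhds (q i)) := by
      have := (Tmap_cont p (q i)).tendsto p
      rwa [Tmap_self] at this
    exact ht.eventually (husc (q i) _ (lt_add_of_pos_right _ hδpos))
  filter_upwards [hev] with r hr
  have hsum' : (∑ i, c i • Tmap p r (q i)) = r := by
    have h1 : (∑ i, c i • q i).1 = p.1 := by rw [hsum]
    have h21 : (∑ i, c i • q i).2.1 = p.2.1 := by rw [hsum]
    have h22 : (∑ i, c i • q i).2.2 = p.2.2 := by rw [hsum]
    simp only [Fin.sum_univ_three, Prod.fst_add, Prod.snd_add, Prod.smul_fst, Prod.smul_snd,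
      smul_eq_mul] at h1 h21 h22
    have hc3 : c 0 + c 1 + c 2 = 1 := by
      have := hcs; rwa [Fin.sum_univ_three] at this
    unfold Tmap hmul
    simp only [Fin.sum_univ_three, Prod.ext_iff, Prod.fst_add, Prod.snd_add, Prod.smul_fst,
      Prod.smul_snd, smul_eq_mul]
    refine ⟨by linear_combination h1 + r.1 * hc3 - p.1 * hc3, by linear_combination h21 + r.2.1 * hc3 - p.2.1 * hc3, ?_⟩
    linear_combination h22 + (r.2.2 - p.2.2 + (p.1 * r.2.1 - r.1 * p.2.1) / 2) * hc3
      + ((r.1 - p.1) / 2) * h21 - ((r.2.1 - p.2.1) / 2) * h1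
  have hkey : Sop u r ≤ ∑ i, c i * u (Tmap p r (q i)) :=
    csInf_le ⟨m, hbdd r⟩ ⟨c, fun i => Tmap p r (q i), hc, hcs,
      fun i => Tmap_plane p r (q i) (hpl i), hsum', rfl⟩
  have h2 : (∑ i, c i * u (Tmap p r (q i))) ≤ (∑ i, c i * u (q i)) + δ := by
    have : (∑ i, c i * u (Tmap p r (q i))) ≤ ∑ i, c i * (u (q i) + δ) :=
      Finset.sum_le_sum fun i _ => mul_le_mul_of_nonneg_left (le_of_lt (hr i)) (hc i).1
    calc (∑ i, c i * u (Tmap p r (q i))) ≤ ∑ i, c i * (u (q i) + δ) := this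
    _ = (∑ i, c i * u (q i)) + (∑ i, c i) * δ := by
        simp [mul_add, Finset.sum_add_distrib, Finset.sum_mul]
    _ = (∑ i, c i * u (q i)) + δ := by rw [hcs, one_mul]
  calc Sop u r ≤ (∑ i, c i * u (Tmap p r (q i))) := hkey
  _ ≤ (∑ i, c i * u (q i)) + δ := h2
  _ < y := by simp only [hδ]; linarith
end
end

section
/- If u: H → R is lower semicontinuous and coercive in the sense that inf_{|p|≥R} u(p)/|p| → ∞ as R → ∞, then S[u] is lower semicontinuous on H. -/
noncomputable section

open Filter Topology Metric Set

/-- A lower semicontinuous real function is bounded below on a compact set. -/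
lemma lsc_bddBelow_on_compact {g : H3 → ℝ} (hg : LowerSemicontinuous g)
    {s : Set H3} (hs : IsCompact s) : ∃ m : ℝ, ∀ q ∈ s, m ≤ g q := by
  obtain ⟨t, -, hcov⟩ := hs.elim_nhds_subcover (fun x => {y | g x - 1 < g y})
    (fun x _ => hg x (g x - 1) (by linarith))
  rcases t.eq_empty_or_nonempty with rfl | hte
  · exact ⟨0, fun q hq => absurd (hcov hq) (by simp)⟩
  · refine ⟨t.inf' hte (fun x => g x - 1), fun q hq => ?_⟩
    obtain ⟨x, hxt, hx⟩ := Set.mem_iUnion₂.1 (hcov hq)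
    exact le_trans (Finset.inf'_le _ hxt) hx.le

/-- Coercivity plus lower semicontinuity give affine lower bounds with arbitrary slope. -/
lemma exists_lin_lb (u : H3 → ℝ) (hlsc : LowerSemicontinuous u) (hcoer : Coercive u)
    (C : ℝ) : ∃ m : ℝ, ∀ q : H3, C * ‖q‖ + m ≤ u q := by
  obtain ⟨R, hR⟩ := hcoer C
  have hcont : Continuous (fun q : H3 => -(C * ‖q‖)) :=
    (continuous_const.mul continuous_norm).neg
  have hg : LowerSemicontinuous (fun q : H3 => u q + -(C * ‖q‖)) :=
    hlsc.add hcont.lowerSemicontinuous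
  obtain ⟨m', hm'⟩ := lsc_bddBelow_on_compact hg (isCompact_closedBall (0 : H3) (max R 1))
  refine ⟨min m' 0, fun q => ?_⟩
  by_cases hq : ‖q‖ ≤ max R 1
  · have h1 := hm' q (by simpa [Metric.mem_closedBall, dist_zero_right] using hq)
    have h2 : min m' 0 ≤ u q + -(C * ‖q‖) := le_trans (min_le_left _ _) h1
    linarith
  · push_neg at hq
    have h1 : (1 : ℝ) ≤ ‖q‖ := le_of_lt (lt_of_le_of_lt (le_max_right R 1) hq)
    have h0 : (0 : ℝ) < ‖q‖ := by linarith
    have h2 := hR q (le_of_lt (lt_of_le_of_lt (le_max_left R 1) hq))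
    have hCq : C * ‖q‖ ≤ u q := (le_div_iff₀ h0).1 h2
    have : min m' 0 ≤ 0 := min_le_right _ _
    linarith

/-- The admissible set defining `Sop`. -/
def Aset (u : H3 → ℝ) (p : H3) : Set ℝ :=
  { s : ℝ | ∃ (c : Fin 3 → ℝ) (q : Fin 3 → H3),
    (∀ i, c i ∈ Set.Icc (0 : ℝ) 1) ∧ (∑ i, c i) = 1 ∧ (∀ i, onPlane p (q i)) ∧
    (∑ i, c i • q i) = p ∧ s = ∑ i, c i * u (q i) }

lemma Sop_eq_sInf (u : H3 → ℝ) (p : H3) : Sop u p = sInf (Aset u p) := rfl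

lemma self_mem_Aset (u : H3 → ℝ) (p : H3) : u p ∈ Aset u p := by
  refine ⟨![1, 0, 0], fun _ => p, ?_, ?_, ?_, ?_, ?_⟩
  · intro i; fin_cases i <;> norm_num
  · simp [Fin.sum_univ_three]
  · intro i; unfold onPlane; ring
  · simp [Fin.sum_univ_three]
  · simp [Fin.sum_univ_three]

set_option maxHeartbeats 2000000 in
theorem S_lowerSemicontinuous (u : H3 → ℝ) (hlsc : LowerSemicontinuous u)
    (hcoer : Coercive u) :
    LowerSemicontinuous (Sop u) := by
  obtain ⟨m₀, hm₀⟩ := exists_lin_lb u hlsc hcoer 0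
  have hm₀' : ∀ q, m₀ ≤ u q := fun q => by have := hm₀ q; simpa using this
  obtain ⟨m₁, hm₁⟩ := exists_lin_lb u hlsc hcoer 1
  have hA_lb : ∀ (p' : H3) (s : ℝ), s ∈ Aset u p' → m₀ ≤ s := by
    rintro p' s ⟨c, q, hc, hsum, -, -, rfl⟩
    calc m₀ = ∑ i, c i * m₀ := by rw [← Finset.sum_mul, hsum, one_mul]
    _ ≤ ∑ i, c i * u (q i) :=
      Finset.sum_le_sum fun i _ => mul_le_mul_of_nonneg_left (hm₀' (q i)) (hc i).1
  intro p t ht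
  by_contra hcon
  set t' : ℝ := (t + Sop u p) / 2 with ht'def
  have htt' : t < t' := by rw [ht'def]; linarith
  have ht'S : t' < Sop u p := by rw [ht'def]; linarith
  rw [Metric.eventually_nhds_iff] at hcon
  push_neg at hcon
  have hseq : ∀ n : ℕ, ∃ p' : H3, dist p' p < 1 / (n + 1) ∧ Sop u p' ≤ t := by
    intro n
    obtain ⟨p', h1, h2⟩ := hcon (1 / (n + 1)) (by positivity)
    exact ⟨p', h1, h2⟩
  choose ps hps1 hps2 using hseq
  have hptend : Tendsto ps atTop (𝓝 p) := by
    rw [tendsto_iff_dist_tendsto_zero]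
    apply squeeze_zero (fun n => dist_nonneg) (fun n => (hps1 n).le)
    exact tendsto_one_div_add_atTop_nhds_zero_nat
  -- choose near-optimal witnesses for each n
  have hwit : ∀ n, ∃ (c : Fin 3 → ℝ) (q : Fin 3 → H3),
      (∀ i, c i ∈ Set.Icc (0 : ℝ) 1) ∧ (∑ i, c i) = 1 ∧ (∀ i, onPlane (ps n) (q i)) ∧
      (∑ i, c i • q i) = ps n ∧ (∑ i, c i * u (q i)) < t' := by
    intro n
    have hne : (Aset u (ps n)).Nonempty := ⟨u (ps n), self_mem_Aset u (ps n)⟩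
    have hlt : sInf (Aset u (ps n)) < t' := by
      rw [← Sop_eq_sInf]; exact lt_of_le_of_lt (hps2 n) htt'
    obtain ⟨s, hs, hst⟩ := exists_lt_of_csInf_lt hne hlt
    obtain ⟨c, q, h1, h2, h3, h4, rfl⟩ := hs
    exact ⟨c, q, h1, h2, h3, h4, hst⟩
  choose c q hc01 hcsum hplane hbary hval using hwit
  -- uniform bounds
  have hterm_lb : ∀ n j, -|m₀| ≤ c n j * u (q n j) := by
    intro n j
    have h1 : c n j * m₀ ≤ c n j * u (q n j) :=
      mul_le_mul_of_nonneg_left (hm₀' _) (hc01 n j).1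
    nlinarith [(hc01 n j).1, (hc01 n j).2, abs_nonneg m₀, neg_abs_le m₀, le_abs_self m₀]
  have hcu_ub : ∀ n i, c n i * u (q n i) ≤ t' + 2 * |m₀| := by
    intro n i
    have hadd := Finset.add_sum_erase Finset.univ (fun j => c n j * u (q n j))
      (Finset.mem_univ i)
    have h2 : ∑ j ∈ Finset.univ.erase i, (-|m₀|) ≤
        ∑ j ∈ Finset.univ.erase i, c n j * u (q n j) :=
      Finset.sum_le_sum fun j _ => hterm_lb n j
    have h3 : ∑ j ∈ Finset.univ.erase i, (-|m₀|) = -(2 * |m₀|) := by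
      rw [Finset.sum_const, Finset.card_erase_of_mem (Finset.mem_univ i)]
      simp
    have h4 := (hval n).le
    rw [← hadd] at h4
    beta_reduce at h4
    linarith
  set K : ℝ := max (t' + 2 * |m₀|) 0 with hKdef
  have hK0 : 0 ≤ K := le_max_right _ _
  have hcuK : ∀ n i, c n i * u (q n i) ≤ K := fun n i => (hcu_ub n i).trans (le_max_left _ _)
  have hcq_ub : ∀ n i, c n i * ‖q n i‖ ≤ K + |m₁| := by
    intro n i
    have h1 : ‖q n i‖ ≤ u (q n i) - m₁ := by linarith [hm₁ (q n i), norm_nonneg (q n i)]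
    have h2 : c n i * ‖q n i‖ ≤ c n i * (u (q n i) - m₁) :=
      mul_le_mul_of_nonneg_left h1 (hc01 n i).1
    nlinarith [hcuK n i, (hc01 n i).1, (hc01 n i).2, neg_abs_le m₁, le_abs_self m₁]
  -- Bolzano–Weierstrass in the product space
  set B : ℝ := K + |m₁| + 1 with hBdef
  have hB1 : (1 : ℝ) ≤ B := by rw [hBdef]; linarith [hK0, abs_nonneg m₁]
  have hmemB : ∀ n, ((c n, fun i => c n i • q n i) : (Fin 3 → ℝ) × (Fin 3 → H3)) ∈
      Metric.closedBall (0 : (Fin 3 → ℝ) × (Fin 3 → H3)) B := by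
    intro n
    rw [Metric.mem_closedBall, dist_zero_right, Prod.norm_def]
    apply max_le
    · refine (pi_norm_le_iff_of_nonneg (by linarith)).2 fun i => ?_
      rw [Real.norm_eq_abs, abs_of_nonneg (hc01 n i).1]
      linarith [(hc01 n i).2]
    · refine (pi_norm_le_iff_of_nonneg (by linarith)).2 fun i => ?_
      rw [norm_smul, Real.norm_eq_abs, abs_of_nonneg (hc01 n i).1]
      linarith [hcq_ub n i]
  obtain ⟨a, -, φ, hφmono, hxφ⟩ :=
    tendsto_subseq_of_bounded Metric.isBounded_closedBall hmemB
  have hφat : Tendsto φ atTop atTop := hφmono.tendsto_atTop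
  have hcT : ∀ i, Tendsto (fun n => c (φ n) i) atTop (𝓝 (a.1 i)) := fun i =>
    (((continuous_apply i).comp continuous_fst).tendsto a).comp hxφ
  have hrT : ∀ i, Tendsto (fun n => c (φ n) i • q (φ n) i) atTop (𝓝 (a.2 i)) := fun i =>
    (((continuous_apply i).comp continuous_snd).tendsto a).comp hxφ
  have ha0 : ∀ i, 0 ≤ a.1 i := fun i =>
    ge_of_tendsto (hcT i) (Eventually.of_forall fun n => (hc01 _ i).1)
  have ha1 : ∀ i, a.1 i ≤ 1 := fun i =>
    le_of_tendsto (hcT i) (Eventually.of_forall fun n => (hc01 _ i).2)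
  have hasum : (∑ i, a.1 i) = 1 := by
    have h1 : Tendsto (fun n => ∑ i, c (φ n) i) atTop (𝓝 (∑ i, a.1 i)) :=
      tendsto_finset_sum _ fun i _ => hcT i
    have h2 : (fun n => ∑ i, c (φ n) i) = fun _ => (1 : ℝ) := funext fun n => hcsum _
    rw [h2] at h1
    exact (tendsto_nhds_unique tendsto_const_nhds h1).symm
  have hrsum : (∑ i, a.2 i) = p := by
    have h1 : Tendsto (fun n => ∑ i, c (φ n) i • q (φ n) i) atTop (𝓝 (∑ i, a.2 i)) :=
      tendsto_finset_sum _ fun i _ => hrT i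
    have h2 : (fun n => ∑ i, c (φ n) i • q (φ n) i) = fun n => ps (φ n) :=
      funext fun n => hbary _
    rw [h2] at h1
    exact tendsto_nhds_unique h1 (hptend.comp hφat)
  have hr0 : ∀ i, a.1 i = 0 → a.2 i = 0 := by
    intro i hz
    have key : ∀ ε : ℝ, 0 < ε → ‖a.2 i‖ ≤ ε := by
      intro ε hε
      set δ : ℝ := ε / (2 * (K + 1)) with hδdef
      have hδpos : 0 < δ := by positivity
      obtain ⟨m₂, hm₂⟩ := exists_lin_lb u hlsc hcoer (1 / δ)
      have hbound : ∀ n j, c n j * ‖q n j‖ ≤ δ * K + δ * |m₂| * c n j := by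
        intro n j
        have hq1 : ‖q n j‖ ≤ δ * (u (q n j) - m₂) := by
          have h0 := mul_le_mul_of_nonneg_left
            (show (1 / δ) * ‖q n j‖ ≤ u (q n j) - m₂ by linarith [hm₂ (q n j)]) hδpos.le
          rwa [← mul_assoc, mul_one_div_cancel hδpos.ne', one_mul] at h0
        have hq2 : c n j * ‖q n j‖ ≤ c n j * (δ * (u (q n j) - m₂)) :=
          mul_le_mul_of_nonneg_left hq1 (hc01 n j).1
        have hq3 : 0 ≤ δ * (c n j * (|m₂| + m₂)) :=
          mul_nonneg hδpos.le (mul_nonneg (hc01 n j).1 (by nlinarith [neg_abs_le m₂]))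
        have hq4 : 0 ≤ δ * (K - c n j * u (q n j)) :=
          mul_nonneg hδpos.le (sub_nonneg.2 (hcuK n j))
        nlinarith
      have hcsmall : ∀ᶠ n in atTop, c (φ n) i < ε / (2 * (δ * |m₂| + 1)) := by
        have hlt : (0 : ℝ) < ε / (2 * (δ * |m₂| + 1)) := by positivity
        have h1 := hcT i
        rw [hz] at h1
        exact h1.eventually (eventually_lt_nhds hlt)
      have hnorm_ev : ∀ᶠ n in atTop, ‖c (φ n) i • q (φ n) i‖ ≤ ε := by
        filter_upwards [hcsmall] with n hn
        rw [norm_smul, Real.norm_eq_abs, abs_of_nonneg (hc01 _ i).1]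
        have h1 := hbound (φ n) i
        have h2 : δ * K ≤ ε / 2 := by
          rw [hδdef, div_mul_eq_mul_div, div_le_div_iff₀ (by positivity) (by norm_num)]
          nlinarith
        have h3 : δ * |m₂| * c (φ n) i ≤ ε / 2 := by
          have hs : 0 ≤ δ * |m₂| := mul_nonneg hδpos.le (abs_nonneg m₂)
          have h4 : δ * |m₂| * c (φ n) i ≤ δ * |m₂| * (ε / (2 * (δ * |m₂| + 1))) :=
            mul_le_mul_of_nonneg_left hn.le hs
          have h5 : δ * |m₂| * (ε / (2 * (δ * |m₂| + 1))) ≤ ε / 2 := by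
            rw [mul_div_assoc', div_le_div_iff₀ (by positivity) (by norm_num)]
            nlinarith
          linarith
        linarith
      exact le_of_tendsto (hrT i).norm hnorm_ev
    have hn0 : ‖a.2 i‖ ≤ 0 := by
      by_contra hcc
      push_neg at hcc
      linarith [key (‖a.2 i‖ / 2) (by linarith)]
    exact norm_le_zero_iff.1 hn0
  set Q : Fin 3 → H3 := fun i => if a.1 i = 0 then p else (a.1 i)⁻¹ • a.2 i with hQdef
  have hQT : ∀ i, a.1 i ≠ 0 → Tendsto (fun n => q (φ n) i) atTop (𝓝 (Q i)) := by
    intro i hz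
    have hpos : 0 < a.1 i := lt_of_le_of_ne (ha0 i) (Ne.symm hz)
    have h1 : Tendsto (fun n => (c (φ n) i)⁻¹ • (c (φ n) i • q (φ n) i)) atTop
        (𝓝 ((a.1 i)⁻¹ • a.2 i)) := ((hcT i).inv₀ hz).smul (hrT i)
    have h2 : ∀ᶠ n in atTop,
        (c (φ n) i)⁻¹ • (c (φ n) i • q (φ n) i) = q (φ n) i := by
      filter_upwards [(hcT i).eventually (eventually_gt_nhds (half_lt_self hpos))] with n hn
      have hne : c (φ n) i ≠ 0 := ne_of_gt (by linarith)
      rw [smul_smul, inv_mul_cancel₀ hne, one_smul]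
    have h3 := Filter.Tendsto.congr' h2 h1
    rw [hQdef]
    simp only [if_neg hz]
    exact h3
  have hQplane : ∀ i, onPlane p (Q i) := by
    intro i
    by_cases hz : a.1 i = 0
    · rw [hQdef]
      simp only [if_pos hz]
      unfold onPlane
      ring
    · have hq := hQT i hz
      have hp : Tendsto (fun n => ps (φ n)) atTop (𝓝 p) := hptend.comp hφat
      have c1 : Tendsto (fun n => (ps (φ n)).1) atTop (𝓝 p.1) :=
        (continuous_fst.tendsto p).comp hp
      have c2 : Tendsto (fun n => (ps (φ n)).2.1) atTop (𝓝 p.2.1) :=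
        ((continuous_fst.comp continuous_snd).tendsto p).comp hp
      have c3 : Tendsto (fun n => (ps (φ n)).2.2) atTop (𝓝 p.2.2) :=
        ((continuous_snd.comp continuous_snd).tendsto p).comp hp
      have d1 : Tendsto (fun n => (q (φ n) i).1) atTop (𝓝 (Q i).1) :=
        (continuous_fst.tendsto (Q i)).comp hq
      have d2 : Tendsto (fun n => (q (φ n) i).2.1) atTop (𝓝 (Q i).2.1) :=
        ((continuous_fst.comp continuous_snd).tendsto (Q i)).comp hq
      have d3 : Tendsto (fun n => (q (φ n) i).2.2) atTop (𝓝 (Q i).2.2) :=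
        ((continuous_snd.comp continuous_snd).tendsto (Q i)).comp hq
      have e : Tendsto (fun n => (ps (φ n)).2.1 * (q (φ n) i).1 -
          (ps (φ n)).1 * (q (φ n) i).2.1 + 2 * (q (φ n) i).2.2 - 2 * (ps (φ n)).2.2) atTop
          (𝓝 (p.2.1 * (Q i).1 - p.1 * (Q i).2.1 + 2 * (Q i).2.2 - 2 * p.2.2)) :=
        (((c2.mul d1).sub (c1.mul d2)).add (tendsto_const_nhds.mul d3)).sub
          (tendsto_const_nhds.mul c3)
      have e0 : ∀ n, (ps (φ n)).2.1 * (q (φ n) i).1 - (ps (φ n)).1 * (q (φ n) i).2.1 +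
          2 * (q (φ n) i).2.2 - 2 * (ps (φ n)).2.2 = 0 := fun n => hplane (φ n) i
      have e1 := e.congr e0
      exact (tendsto_nhds_unique e1 tendsto_const_nhds)
  have hQbary : (∑ i, a.1 i • Q i) = p := by
    rw [← hrsum]
    apply Finset.sum_congr rfl
    intro i _
    by_cases hz : a.1 i = 0
    · rw [hz, zero_smul, hr0 i hz]
    · rw [hQdef]
      simp only [if_neg hz]
      rw [smul_smul, mul_inv_cancel₀ hz, one_smul]
  set sstar : ℝ := ∑ i, a.1 i * u (Q i) with hsstardef
  have hmem : sstar ∈ Aset u p :=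
    ⟨a.1, Q, fun i => ⟨ha0 i, ha1 i⟩, hasum, hQplane, hQbary, rfl⟩
  have hSle : Sop u p ≤ sstar := by
    rw [Sop_eq_sInf]
    exact csInf_le ⟨m₀, fun s hs => hA_lb p s hs⟩ hmem
  have hclaim : ∀ ε : ℝ, 0 < ε → sstar ≤ t' + ε := by
    intro ε hε
    have hev : ∀ i, ∀ᶠ n in atTop,
        a.1 i * (u (Q i) - m₀) - ε / 3 ≤ c (φ n) i * (u (q (φ n) i) - m₀) := by
      intro i
      by_cases hz : a.1 i = 0
      · refine Eventually.of_forall fun n => ?_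
        have h1 : 0 ≤ c (φ n) i * (u (q (φ n) i) - m₀) :=
          mul_nonneg (hc01 _ i).1 (by linarith [hm₀' (q (φ n) i)])
        rw [hz]
        linarith
      · have hpos : 0 < a.1 i := lt_of_le_of_ne (ha0 i) (Ne.symm hz)
        set w : ℝ := u (Q i) - m₀ with hwdef
        have hw0 : 0 ≤ w := by rw [hwdef]; linarith [hm₀' (Q i)]
        set δ : ℝ := min (a.1 i) ((ε / 3) / (a.1 i + w + 1)) with hδdef
        have hδpos : 0 < δ := lt_min hpos (by positivity)
        have hδa : δ ≤ a.1 i := min_le_left _ _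
        have hδs : δ * (a.1 i + w) ≤ ε / 3 := by
          have h1 : δ ≤ (ε / 3) / (a.1 i + w + 1) := min_le_right _ _
          have h2 : (0 : ℝ) < a.1 i + w + 1 := by linarith
          rw [le_div_iff₀ h2] at h1
          nlinarith
        have e1 := (hcT i).eventually (eventually_gt_nhds
          (show a.1 i - δ < a.1 i by linarith))
        have e2 := (hQT i hz).eventually (hlsc (Q i) (u (Q i) - δ) (by linarith))
        filter_upwards [e1, e2] with n h1 h2
        have hc0 : 0 ≤ a.1 i - δ := by linarith
        have hu0 : 0 ≤ u (q (φ n) i) - m₀ := by linarith [hm₀' (q (φ n) i)]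
        have step1 : (a.1 i - δ) * (u (q (φ n) i) - m₀) ≤
            c (φ n) i * (u (q (φ n) i) - m₀) := mul_le_mul_of_nonneg_right h1.le hu0
        have step2 : (a.1 i - δ) * (w - δ) ≤ (a.1 i - δ) * (u (q (φ n) i) - m₀) :=
          mul_le_mul_of_nonneg_left (by rw [hwdef]; linarith) hc0
        nlinarith [sq_nonneg δ]
    obtain ⟨n, hn⟩ := (Filter.eventually_all.2 hev).exists
    have hsum1 : ∑ i, (a.1 i * (u (Q i) - m₀) - ε / 3) ≤
        ∑ i, c (φ n) i * (u (q (φ n) i) - m₀) := Finset.sum_le_sum fun i _ => hn i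
    have hasum3 := hasum
    have hcsum3 := hcsum (φ n)
    have hval3 := (hval (φ n)).le
    simp only [Fin.sum_univ_three] at hsum1 hasum3 hcsum3 hval3
    rw [hsstardef, Fin.sum_univ_three]
    have hL : a.1 0 * (u (Q 0) - m₀) - ε / 3 + (a.1 1 * (u (Q 1) - m₀) - ε / 3) +
        (a.1 2 * (u (Q 2) - m₀) - ε / 3) =
        a.1 0 * u (Q 0) + a.1 1 * u (Q 1) + a.1 2 * u (Q 2) - m₀ - ε := by
      linear_combination (-m₀) * hasum3
    have hR : c (φ n) 0 * (u (q (φ n) 0) - m₀) + c (φ n) 1 * (u (q (φ n) 1) - m₀) +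
        c (φ n) 2 * (u (q (φ n) 2) - m₀) =
        c (φ n) 0 * u (q (φ n) 0) + c (φ n) 1 * u (q (φ n) 1) +
        c (φ n) 2 * u (q (φ n) 2) - m₀ := by
      linear_combination (-m₀) * hcsum3
    linarith
  have hfinal : sstar ≤ t' := by
    by_contra hcc
    push_neg at hcc
    linarith [hclaim ((sstar - t') / 2) (by linarith)]
  linarith
end
end

section
/- Let u: H → R be continuous and bounded below, and let U(p) = lim_{n→∞} Sⁿ[u](p) (the limit exists by monotonicity S[u] ≤ u). Then U is h-convex on H: U(p·h) + U(p·h⁻¹) ≥ 2U(p) for all p ∈ H and h ∈ H_0. -/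
noncomputable section

def SopSet (u : H3 → ℝ) (p : H3) : Set ℝ :=
  { s : ℝ | ∃ (c : Fin 3 → ℝ) (q : Fin 3 → H3),
    (∀ i, c i ∈ Set.Icc (0 : ℝ) 1) ∧ (∑ i, c i) = 1 ∧ (∀ i, onPlane p (q i)) ∧
    (∑ i, c i • q i) = p ∧ s = ∑ i, c i * u (q i) }

lemma SopSet_lb {u : H3 → ℝ} {m : ℝ} (hm : ∀ q, m ≤ u q) (p : H3) :
    ∀ s ∈ SopSet u p, m ≤ s := by
  rintro s ⟨c, q, hc, hsum, -, -, rfl⟩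
  calc m = ∑ i, c i * m := by
        rw [← Finset.sum_mul, hsum, one_mul]
    _ ≤ ∑ i, c i * u (q i) :=
        Finset.sum_le_sum fun i _ => mul_le_mul_of_nonneg_left (hm _) (hc i).1

lemma Sop_lb {u : H3 → ℝ} {m : ℝ} (hm : ∀ q, m ≤ u q) (p : H3) :
    m ≤ Sop u p := by
  apply le_csInf
  · exact ⟨u p, ![1,0,0], ![p,p,p], by
      constructor
      · intro i; fin_cases i <;> norm_num
      constructor
      · simp [Fin.sum_univ_three]
      constructor
      · intro i; fin_cases i <;> simp [onPlane] <;> ring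
      constructor
      · simp [Fin.sum_univ_three]
      · simp [Fin.sum_univ_three]⟩
  · exact SopSet_lb hm p

lemma Sop_le {u : H3 → ℝ} {m : ℝ} (hm : ∀ q, m ≤ u q) (p h : H3) (hh : h.2.2 = 0) :
    2 * Sop u p ≤ u (hmul p h) + u (hmul p (-h.1, -h.2.1, -h.2.2)) := by
  have mem : ((u (hmul p h) + u (hmul p (-h.1, -h.2.1, -h.2.2))) / 2) ∈ SopSet u p := by
    refine ⟨![1/2, 1/2, 0], ![hmul p h, hmul p (-h.1, -h.2.1, -h.2.2), p], ?_, ?_, ?_, ?_, ?_⟩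
    · intro i; fin_cases i <;> norm_num
    · simp [Fin.sum_univ_three]; norm_num
    · intro i; fin_cases i <;> simp [onPlane, hmul, hh] <;> ring
    · refine Prod.ext ?_ (Prod.ext ?_ ?_) <;>
        simp [Fin.sum_univ_three, hmul, Prod.smul_def, smul_eq_mul, hh] <;> ring
    · simp [Fin.sum_univ_three]; ring
  have := csInf_le ⟨m, fun s hs => SopSet_lb hm p s hs⟩ mem
  have : Sop u p ≤ (u (hmul p h) + u (hmul p (-h.1, -h.2.1, -h.2.2))) / 2 := this
  linarith

theorem iterated_limit_hConvex (u : H3 → ℝ) (hc : Continuous u)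
    (hb : BddBelow (Set.range u)) (U : H3 → ℝ)
    (hU : ∀ p : H3, Filter.Tendsto (fun n => (Sop^[n] u) p) Filter.atTop (nhds (U p))) :
    hConvex U := by
  obtain ⟨m, hm⟩ := hb
  have hm' : ∀ q, m ≤ u q := fun q => hm ⟨q, rfl⟩
  have hlb : ∀ n q, m ≤ (Sop^[n] u) q := by
    intro n
    induction n with
    | zero => exact hm'
    | succ n ih =>
      intro q
      rw [Function.iterate_succ_apply']
      exact Sop_lb ih q
  intro p h hh
  have key : ∀ n : ℕ, 2 * (Sop^[n+1] u) p ≤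
      (Sop^[n] u) (hmul p h) + (Sop^[n] u) (hmul p (-h.1, -h.2.1, -h.2.2)) := by
    intro n
    rw [Function.iterate_succ_apply']
    exact Sop_le (hlb n) p h hh
  have t1 : Filter.Tendsto (fun n : ℕ => 2 * (Sop^[n+1] u) p) Filter.atTop (nhds (2 * U p)) :=
    ((hU p).comp (Filter.tendsto_add_atTop_nat 1)).const_mul 2
  have t2 : Filter.Tendsto
      (fun n : ℕ => (Sop^[n] u) (hmul p h) + (Sop^[n] u) (hmul p (-h.1, -h.2.1, -h.2.2)))
      Filter.atTop (nhds (U (hmul p h) + U (hmul p (-h.1, -h.2.1, -h.2.2)))) :=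
    (hU (hmul p h)).add (hU (hmul p (-h.1, -h.2.1, -h.2.2)))
  exact le_of_tendsto_of_tendsto' t1 t2 key
end
end

section
/- Let u(x,y,z) = (x−y)z + (x−y)²z² + (x²+y²)² + z². Then u is continuous, bounded below, and coercive, but S[u] is not h-convex: for all sufficiently small t > 0, with h_t = (t,t,0), one has S[u](h_t) + S[u](h_t⁻¹) < 2 S[u](0,0,0). Specifically, S[u](h_t) ≤ −2t³ + 4t⁶ + 17t⁴, S[u](h_t⁻¹) ≥ 0, and S[u](0,0,0) = 0. -/
noncomputable section

/-! ### Auxiliary material -/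

def Ufun : H3 → ℝ := fun p => (p.1 - p.2.1) * p.2.2 + (p.1 - p.2.1) ^ 2 * p.2.2 ^ 2
  + (p.1 ^ 2 + p.2.1 ^ 2) ^ 2 + p.2.2 ^ 2

lemma Sop_eq (u : H3 → ℝ) (p : H3) : Sop u p = sInf (SopSet u p) := rfl

lemma Ufun_lb (p : H3) : -(1/4 : ℝ) ≤ Ufun p := by
  obtain ⟨x, y, z⟩ := p
  simp only [Ufun]
  nlinarith [sq_nonneg ((x - y) * z + 1/2), sq_nonneg (x^2 + y^2), sq_nonneg z,
    sq_nonneg ((x-y)*z)]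

lemma SopSet_bddBelow (p : H3) : BddBelow (SopSet Ufun p) := by
  refine ⟨-(1/4), ?_⟩
  rintro s ⟨c, q, hc, hsum, -, -, rfl⟩
  have h0 := (hc 0).1; have h1 := (hc 1).1; have h2 := (hc 2).1
  have u0 := Ufun_lb (q 0); have u1 := Ufun_lb (q 1); have u2 := Ufun_lb (q 2)
  rw [Fin.sum_univ_three] at hsum ⊢
  nlinarith [mul_le_mul_of_nonneg_left u0 h0, mul_le_mul_of_nonneg_left u1 h1,
    mul_le_mul_of_nonneg_left u2 h2]

/-- the trivial combination: the point itself -/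
lemma SopSet_self_mem (p : H3) (hp : onPlane p p) : Ufun p ∈ SopSet Ufun p := by
  refine ⟨![1, 0, 0], ![p, p, p], ?_, ?_, ?_, ?_, ?_⟩
  · intro i; fin_cases i <;> norm_num
  · simp [Fin.sum_univ_three]
  · intro i; fin_cases i <;> simpa using hp
  · simp [Fin.sum_univ_three]
  · simp [Fin.sum_univ_three]

lemma Sop_zero : Sop Ufun ((0 : ℝ), (0 : ℝ), (0 : ℝ)) = 0 := by
  rw [Sop_eq]
  have hmem : (0 : ℝ) ∈ SopSet Ufun ((0 : ℝ), (0 : ℝ), (0 : ℝ)) := by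
    have h := SopSet_self_mem ((0 : ℝ), (0 : ℝ), (0 : ℝ)) (by simp [onPlane])
    simpa [Ufun] using h
  refine le_antisymm (csInf_le (SopSet_bddBelow _) hmem) ?_
  refine le_csInf ⟨0, hmem⟩ ?_
  rintro s ⟨c, q, hc, -, hplane, -, rfl⟩
  refine Finset.sum_nonneg fun i _ => mul_nonneg (hc i).1 ?_
  have hz := hplane i
  revert hz
  obtain ⟨x, y, z⟩ := q i
  intro hz
  simp only [onPlane] at hz
  have hz' : z = 0 := by linarith
  subst hz'
  simp only [Ufun]
  have he : (x - y) * 0 + (x - y) ^ 2 * 0 ^ 2 + (x ^ 2 + y ^ 2) ^ 2 + 0 ^ 2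
      = (x ^ 2 + y ^ 2) ^ 2 := by ring
  rw [he]
  positivity

lemma Sop_neg_nonneg (t : ℝ) (ht : 0 < t) : 0 ≤ Sop Ufun (-t, -t, 0) := by
  rw [Sop_eq]
  refine le_csInf ⟨Ufun (-t, -t, 0), SopSet_self_mem _ (by simp [onPlane])⟩ ?_
  rintro s ⟨c, q, hc, -, hplane, -, rfl⟩
  refine Finset.sum_nonneg fun i _ => mul_nonneg (hc i).1 ?_
  have hz := hplane i
  revert hz
  obtain ⟨x, y, z⟩ := q i
  intro hz
  simp only [onPlane] at hz
  have hz' : z = t * (x - y) / 2 := by linarith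
  subst hz'
  simp only [Ufun]
  have h1 : 0 ≤ (x - y) * (t * (x - y) / 2) := by nlinarith [sq_nonneg (x - y)]
  positivity

lemma Sop_pos_le (t : ℝ) : Sop Ufun (t, t, 0) ≤ -2 * t ^ 3 + 4 * t ^ 6 + 17 * t ^ 4 := by
  rw [Sop_eq]
  refine csInf_le (SopSet_bddBelow _) ?_
  refine ⟨![1/2, 1/2, 0], ![(2*t, 0, -t^2), (0, 2*t, t^2), (t, t, 0)], ?_, ?_, ?_, ?_, ?_⟩
  · intro i; fin_cases i <;> norm_num
  · norm_num [Fin.sum_univ_three]; rfl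
  · intro i; fin_cases i <;> simp [onPlane] <;> ring
  · simp only [Fin.sum_univ_three, Matrix.cons_val_zero, Matrix.cons_val_one, Matrix.head_cons,
      Matrix.cons_val_two, Matrix.tail_cons, Prod.smul_mk, smul_eq_mul, Prod.mk_add_mk,
      Prod.mk.injEq]
    refine ⟨by ring, by ring, by ring⟩
  · simp only [Fin.sum_univ_three, Matrix.cons_val_zero, Matrix.cons_val_one, Matrix.head_cons,
      Matrix.cons_val_two, Matrix.tail_cons, Ufun]
    ring

lemma Sop_neg_le (t : ℝ) : Sop Ufun (-t, -t, 0) ≤ 4 * t ^ 4 := by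
  rw [Sop_eq]
  have h := SopSet_self_mem ((-t : ℝ), (-t : ℝ), (0 : ℝ)) (by simp [onPlane])
  have he : Ufun (-t, -t, 0) = 4 * t ^ 4 := by simp only [Ufun]; ring
  rw [he] at h
  exact csInf_le (SopSet_bddBelow _) h

theorem S_not_hConvex_example :
    Continuous (fun p : H3 => (p.1 - p.2.1) * p.2.2 + (p.1 - p.2.1) ^ 2 * p.2.2 ^ 2
        + (p.1 ^ 2 + p.2.1 ^ 2) ^ 2 + p.2.2 ^ 2) ∧
    BddBelow (Set.range (fun p : H3 => (p.1 - p.2.1) * p.2.2 + (p.1 - p.2.1) ^ 2 * p.2.2 ^ 2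
        + (p.1 ^ 2 + p.2.1 ^ 2) ^ 2 + p.2.2 ^ 2)) ∧
    Coercive (fun p : H3 => (p.1 - p.2.1) * p.2.2 + (p.1 - p.2.1) ^ 2 * p.2.2 ^ 2
        + (p.1 ^ 2 + p.2.1 ^ 2) ^ 2 + p.2.2 ^ 2) ∧
    Sop (fun p : H3 => (p.1 - p.2.1) * p.2.2 + (p.1 - p.2.1) ^ 2 * p.2.2 ^ 2
        + (p.1 ^ 2 + p.2.1 ^ 2) ^ 2 + p.2.2 ^ 2) ((0 : ℝ), (0 : ℝ), (0 : ℝ)) = 0 ∧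
    ∃ t₀ > (0 : ℝ), ∀ t : ℝ, 0 < t → t < t₀ →
      Sop (fun p : H3 => (p.1 - p.2.1) * p.2.2 + (p.1 - p.2.1) ^ 2 * p.2.2 ^ 2
          + (p.1 ^ 2 + p.2.1 ^ 2) ^ 2 + p.2.2 ^ 2) (t, t, 0)
        ≤ -2 * t ^ 3 + 4 * t ^ 6 + 17 * t ^ 4 ∧
      0 ≤ Sop (fun p : H3 => (p.1 - p.2.1) * p.2.2 + (p.1 - p.2.1) ^ 2 * p.2.2 ^ 2
          + (p.1 ^ 2 + p.2.1 ^ 2) ^ 2 + p.2.2 ^ 2) (-t, -t, 0) ∧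
      Sop (fun p : H3 => (p.1 - p.2.1) * p.2.2 + (p.1 - p.2.1) ^ 2 * p.2.2 ^ 2
          + (p.1 ^ 2 + p.2.1 ^ 2) ^ 2 + p.2.2 ^ 2) (t, t, 0)
        + Sop (fun p : H3 => (p.1 - p.2.1) * p.2.2 + (p.1 - p.2.1) ^ 2 * p.2.2 ^ 2
          + (p.1 ^ 2 + p.2.1 ^ 2) ^ 2 + p.2.2 ^ 2) (-t, -t, 0)
        < 2 * Sop (fun p : H3 => (p.1 - p.2.1) * p.2.2 + (p.1 - p.2.1) ^ 2 * p.2.2 ^ 2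
          + (p.1 ^ 2 + p.2.1 ^ 2) ^ 2 + p.2.2 ^ 2) ((0 : ℝ), (0 : ℝ), (0 : ℝ)) := by
  have hUeq : (fun p : H3 => (p.1 - p.2.1) * p.2.2 + (p.1 - p.2.1) ^ 2 * p.2.2 ^ 2
      + (p.1 ^ 2 + p.2.1 ^ 2) ^ 2 + p.2.2 ^ 2) = Ufun := rfl
  rw [hUeq]
  refine ⟨?_, ?_, ?_, Sop_zero, ?_⟩
  · unfold Ufun; fun_prop
  · refine ⟨-(1/4), ?_⟩
    rintro s ⟨p, rfl⟩
    exact Ufun_lb p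
  · intro C
    refine ⟨max (C + 5/4) 1, fun p hp => ?_⟩
    have h1 : (1 : ℝ) ≤ ‖p‖ := le_trans (le_max_right _ _) hp
    have h2 : C + 5/4 ≤ ‖p‖ := le_trans (le_max_left _ _) hp
    have hpos : (0 : ℝ) < ‖p‖ := lt_of_lt_of_le one_pos h1
    rw [le_div_iff₀ hpos]
    have hkey : ‖p‖ ^ 2 ≤ Ufun p + 5/4 := by
      obtain ⟨x, y, z⟩ := p
      have hnorm : ‖((x, y, z) : H3)‖ = max |x| (max |y| |z|) := rfl
      rw [hnorm]
      have hx : |x| ^ 2 ≤ Ufun (x, y, z) + 5/4 := by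
        simp only [Ufun]; rw [sq_abs]
        nlinarith [sq_nonneg ((x-y)*z + 1/2), sq_nonneg (x^2 - 1), sq_nonneg (x*y), sq_nonneg z]
      have hy : |y| ^ 2 ≤ Ufun (x, y, z) + 5/4 := by
        simp only [Ufun]; rw [sq_abs]
        nlinarith [sq_nonneg ((x-y)*z + 1/2), sq_nonneg (y^2 - 1), sq_nonneg (x*y), sq_nonneg z]
      have hz : |z| ^ 2 ≤ Ufun (x, y, z) + 5/4 := by
        simp only [Ufun]; rw [sq_abs]
        nlinarith [sq_nonneg ((x-y)*z + 1/2), sq_nonneg (x^2+y^2)]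
      rcases max_cases |x| (max |y| |z|) with ⟨heq, -⟩ | ⟨heq, -⟩
      · rw [heq]; exact hx
      · rw [heq]
        rcases max_cases |y| |z| with ⟨heq2, -⟩ | ⟨heq2, -⟩
        · rw [heq2]; exact hy
        · rw [heq2]; exact hz
    nlinarith [sq_nonneg ‖p‖]
  · refine ⟨1/11, by norm_num, fun t ht ht' => ?_⟩
    refine ⟨Sop_pos_le t, Sop_neg_nonneg t ht, ?_⟩
    rw [Sop_zero]
    have h1 := Sop_pos_le t
    have h2 := Sop_neg_le t
    have h3 : 4 * t ^ 3 + 21 * t < 2 := by nlinarith [mul_pos ht ht]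
    have h4 : (0 : ℝ) < t ^ 3 := pow_pos ht 3
    nlinarith [mul_pos h4 (by linarith : (0:ℝ) < 2 - (4 * t ^ 3 + 21 * t))]
end
end

section
/- Let 0 ≤ α < 1/3 and f(x,y,z) = (1−3α)(x²+y²) + x²y² + 2z² − 4α. Then u(x,y,z) = x² + y² + x²y² + 2z² satisfies u − αΔ_H u = f in R^3, where Δ_H u = X²u + Y²u with X = ∂_x − (y/2)∂_z and Y = ∂_y + (x/2)∂_z; moreover the symmetrized horizontal Hessian of f is [[2(1−3α)+3y², 3xy],[3xy, 2(1−3α)+3x²]], which is positive semidefinite at every point. -/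
noncomputable section

-- auxiliary material
def Lx : H3 →L[ℝ] ℝ := ContinuousLinearMap.fst ℝ ℝ (ℝ × ℝ)
def Ly : H3 →L[ℝ] ℝ := (ContinuousLinearMap.fst ℝ ℝ ℝ).comp (ContinuousLinearMap.snd ℝ ℝ (ℝ × ℝ))
def Lz : H3 →L[ℝ] ℝ := (ContinuousLinearMap.snd ℝ ℝ ℝ).comp (ContinuousLinearMap.snd ℝ ℝ (ℝ × ℝ))

def gfun (A C D E F G H I J K : ℝ) : H3 → ℝ := fun q =>
  A * (q.1 ^ 2 + q.2.1 ^ 2) + C * q.1 ^ 2 * q.2.1 ^ 2 + D * q.2.2 ^ 2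
    + E * q.1 + F * q.2.1 + G * (q.1 * q.2.1 ^ 2) + H * (q.1 ^ 2 * q.2.1)
    + I * (q.2.1 * q.2.2) + J * (q.1 * q.2.2) + K

lemma hasFDerivAt_gfun (A C D E F G H I J K : ℝ) (p : H3) :
    HasFDerivAt (gfun A C D E F G H I J K)
      ((2 * A * p.1 + 2 * C * p.1 * p.2.1 ^ 2 + E + G * p.2.1 ^ 2 + 2 * H * p.1 * p.2.1 + J * p.2.2) • Lx
        + (2 * A * p.2.1 + 2 * C * p.1 ^ 2 * p.2.1 + F + 2 * G * p.1 * p.2.1 + H * p.1 ^ 2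
            + I * p.2.2) • Ly
        + (2 * D * p.2.2 + I * p.2.1 + J * p.1) • Lz) p := by
  have hx : HasFDerivAt (fun q : H3 => q.1) Lx p := hasFDerivAt_fst
  have hy : HasFDerivAt (fun q : H3 => q.2.1) Ly p := hasFDerivAt_fst.comp p hasFDerivAt_snd
  have hz : HasFDerivAt (fun q : H3 => q.2.2) Lz p := hasFDerivAt_snd.comp p hasFDerivAt_snd
  have hx2 := hx.mul hx
  have hy2 := hy.mul hy
  have hz2 := hz.mul hz
  have hbig := ((((((((((hx2.add hy2).const_mul A).add
      ((hx2.const_mul C).mul hy2)).add (hz2.const_mul D)).add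
      (hx.const_mul E)).add (hy.const_mul F)).add ((hx.mul hy2).const_mul G)).add
      ((hx2.mul hy).const_mul H)).add ((hy.mul hz).const_mul I)).add ((hx.mul hz).const_mul J)).add_const K
  refine (congrArg₂ (HasFDerivAt · · p) ?_ ?_).mpr hbig
  · funext q; simp [gfun]; ring
  · apply ContinuousLinearMap.ext; intro v
    simp [Lx, Ly, Lz]
    ring

lemma pd_gfun (A C D E F G H I J K : ℝ) (p : H3) :
    pd1 (gfun A C D E F G H I J K) p
        = 2 * A * p.1 + 2 * C * p.1 * p.2.1 ^ 2 + E + G * p.2.1 ^ 2 + 2 * H * p.1 * p.2.1 + J * p.2.2 ∧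
      pd2 (gfun A C D E F G H I J K) p
        = 2 * A * p.2.1 + 2 * C * p.1 ^ 2 * p.2.1 + F + 2 * G * p.1 * p.2.1 + H * p.1 ^ 2
            + I * p.2.2 ∧
      pd3 (gfun A C D E F G H I J K) p = 2 * D * p.2.2 + I * p.2.1 + J * p.1 := by
  have h := (hasFDerivAt_gfun A C D E F G H I J K p).fderiv
  refine ⟨?_, ?_, ?_⟩ <;>
    · simp only [pd1, pd2, pd3, h]
      simp [Lx, Ly, Lz]

lemma Xop_gfun (A C D E F G H I J K : ℝ) (p : H3) :
    Xop (gfun A C D E F G H I J K) p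
      = (2 * A * p.1 + 2 * C * p.1 * p.2.1 ^ 2 + E + G * p.2.1 ^ 2 + 2 * H * p.1 * p.2.1
          + J * p.2.2)
        - p.2.1 / 2 * (2 * D * p.2.2 + I * p.2.1 + J * p.1) := by
  obtain ⟨h1, h2, h3⟩ := pd_gfun A C D E F G H I J K p
  simp [Xop, h1, h3]

lemma Yop_gfun (A C D E F G H I J K : ℝ) (p : H3) :
    Yop (gfun A C D E F G H I J K) p
      = (2 * A * p.2.1 + 2 * C * p.1 ^ 2 * p.2.1 + F + 2 * G * p.1 * p.2.1 + H * p.1 ^ 2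
          + I * p.2.2)
        + p.1 / 2 * (2 * D * p.2.2 + I * p.2.1 + J * p.1) := by
  obtain ⟨h1, h2, h3⟩ := pd_gfun A C D E F G H I J K p
  simp [Yop, h2, h3]

lemma hu_eq : (fun q : H3 => q.1 ^ 2 + q.2.1 ^ 2 + q.1 ^ 2 * q.2.1 ^ 2 + 2 * q.2.2 ^ 2)
    = gfun 1 1 2 0 0 0 0 0 0 0 := by
  funext q; simp [gfun]

lemma hXu_eq : Xop (gfun 1 1 2 0 0 0 0 0 0 0) = gfun 0 0 0 2 0 2 0 (-2) 0 0 := by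
  funext p; rw [Xop_gfun]; simp [gfun]; ring

lemma hYu_eq : Yop (gfun 1 1 2 0 0 0 0 0 0 0) = gfun 0 0 0 0 2 0 2 0 2 0 := by
  funext p; rw [Yop_gfun]; simp [gfun]; ring

theorem semilinear_example (α : ℝ) (hα0 : 0 ≤ α) (hα1 : α < 1 / 3) :
    (∀ p : H3,
      (fun q : H3 => q.1 ^ 2 + q.2.1 ^ 2 + q.1 ^ 2 * q.2.1 ^ 2 + 2 * q.2.2 ^ 2) p
        - α * (Xop (Xop (fun q : H3 => q.1 ^ 2 + q.2.1 ^ 2 + q.1 ^ 2 * q.2.1 ^ 2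
              + 2 * q.2.2 ^ 2)) p
           + Yop (Yop (fun q : H3 => q.1 ^ 2 + q.2.1 ^ 2 + q.1 ^ 2 * q.2.1 ^ 2
              + 2 * q.2.2 ^ 2)) p)
      = (1 - 3 * α) * (p.1 ^ 2 + p.2.1 ^ 2) + p.1 ^ 2 * p.2.1 ^ 2 + 2 * p.2.2 ^ 2
          - 4 * α) ∧
    (∀ p : H3,
      hHess (fun q : H3 => (1 - 3 * α) * (q.1 ^ 2 + q.2.1 ^ 2) + q.1 ^ 2 * q.2.1 ^ 2
          + 2 * q.2.2 ^ 2 - 4 * α) p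
        = !![2 * (1 - 3 * α) + 3 * p.2.1 ^ 2, 3 * p.1 * p.2.1;
             3 * p.1 * p.2.1, 2 * (1 - 3 * α) + 3 * p.1 ^ 2]) ∧
    (∀ p : H3,
      (hHess (fun q : H3 => (1 - 3 * α) * (q.1 ^ 2 + q.2.1 ^ 2) + q.1 ^ 2 * q.2.1 ^ 2
          + 2 * q.2.2 ^ 2 - 4 * α) p).PosSemidef) := by
  have hf : (fun q : H3 => (1 - 3 * α) * (q.1 ^ 2 + q.2.1 ^ 2) + q.1 ^ 2 * q.2.1 ^ 2
      + 2 * q.2.2 ^ 2 - 4 * α) = gfun (1 - 3 * α) 1 2 0 0 0 0 0 0 (-(4 * α)) := by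
    funext q; simp [gfun]; ring
  have hXf : Xop (gfun (1 - 3 * α) 1 2 0 0 0 0 0 0 (-(4 * α)))
      = gfun 0 0 0 (2 * (1 - 3 * α)) 0 2 0 (-2) 0 0 := by
    funext p; rw [Xop_gfun]; simp [gfun]; ring
  have hYf : Yop (gfun (1 - 3 * α) 1 2 0 0 0 0 0 0 (-(4 * α)))
      = gfun 0 0 0 0 (2 * (1 - 3 * α)) 0 2 0 2 0 := by
    funext p; rw [Yop_gfun]; simp [gfun]; ring
  have hmat : ∀ p : H3,
      hHess (fun q : H3 => (1 - 3 * α) * (q.1 ^ 2 + q.2.1 ^ 2) + q.1 ^ 2 * q.2.1 ^ 2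
          + 2 * q.2.2 ^ 2 - 4 * α) p
        = !![2 * (1 - 3 * α) + 3 * p.2.1 ^ 2, 3 * p.1 * p.2.1;
             3 * p.1 * p.2.1, 2 * (1 - 3 * α) + 3 * p.1 ^ 2] := by
    intro p
    rw [hHess, hf, hXf, hYf, Xop_gfun, Xop_gfun, Yop_gfun, Yop_gfun]
    congr 1 <;> ring_nf
  refine ⟨fun p => ?_, hmat, fun p => ?_⟩
  · rw [hu_eq, hXu_eq, hYu_eq, Xop_gfun, Yop_gfun]
    simp [gfun]; ring
  · rw [hmat p]
    refine Matrix.PosSemidef.of_dotProduct_mulVec_nonneg ?_ fun v => ?_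
    · ext i j
      fin_cases i <;> fin_cases j <;> simp [Matrix.conjTranspose_apply]
    · simp [Matrix.mulVec, dotProduct, Fin.sum_univ_two]
      nlinarith [sq_nonneg (v 0), sq_nonneg (v 1), sq_nonneg (p.2.1 * v 0 + p.1 * v 1), hα1]
end
end
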